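/- For every k ∈ {0,1,…,p}, the function β ↦ max{0, ‖β‖₁ − k} is the convex envelope of the trimmed Lasso penalty T_k on the cube [−1,1]^p; that is: (i) β ↦ max{0, ‖β‖₁ − k} is convex; (ii) max{0, ‖β‖₁ − k} ≤ T_k(β) for all β ∈ [−1,1]^p; and (iii) for every convex function h : ℝ^p → ℝ satisfying h(β) ≤ T_k(β) for all β ∈ [−1,1]^p, one has h(β) ≤ max{0, ‖β‖₁ − k} for all β ∈ [−1,1]^p. -/

import Mathlib

open Finset

/-- Absolute values of the entries of `β`, sorted in increasing order. -/
noncomputable def sortAbs {p : ℕ} (β : Fin p → ℝ) : Fin p → ℝ :=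
  fun i => |β (Tuple.sort (fun j => |β j|) i)|

/-- The trimmed Lasso penalty `T_k(β)`: sum of the `p - k` smallest `|β_i|`. -/
noncomputable def trimmedLasso {p : ℕ} (k : ℕ) (β : Fin p → ℝ) : ℝ :=
  ∑ i ∈ Finset.univ.filter (fun i : Fin p => (i : ℕ) < p - k), sortAbs β i

/-- `‖β‖₁`: the ℓ₁ norm. -/
noncomputable def l1 {p : ℕ} (β : Fin p → ℝ) : ℝ := ∑ i, |β i|

namespace TLaux

variable {p : ℕ}

lemma sortAbs_nonneg (β : Fin p → ℝ) (i : Fin p) : 0 ≤ sortAbs β i := abs_nonneg _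

lemma sortAbs_monotone (β : Fin p → ℝ) : Monotone (sortAbs β) :=
  Tuple.monotone_sort (fun j => |β j|)

lemma sum_sortAbs (β : Fin p → ℝ) : ∑ i, sortAbs β i = l1 β :=
  Equiv.sum_comp (Tuple.sort (fun j => |β j|)) (fun j => |β j|)

lemma card_filter_lt (k : ℕ) :
    ((univ.filter fun i : Fin p => (i : ℕ) < p - k)).card = p - k := by
  apply Finset.card_eq_of_bijective (fun n hn => ⟨n, lt_of_lt_of_le hn (Nat.sub_le p k)⟩)
  · intro a ha
    simp only [mem_filter, mem_univ, true_and] at ha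
    exact ⟨a, ha, by simp⟩
  · intro n hn; simp [hn]
  · intro n n' hn hn' he; simpa [Fin.ext_iff] using he

lemma card_filter_not_lt (k : ℕ) (hk : k ≤ p) :
    ((univ.filter fun i : Fin p => ¬ (i : ℕ) < p - k)).card = k := by
  have h1 := Finset.card_filter_add_card_filter_not
    (s := (univ : Finset (Fin p))) (p := fun i : Fin p => (i : ℕ) < p - k)
  rw [card_filter_lt k, Finset.card_univ, Fintype.card_fin] at h1
  omega

lemma split (k : ℕ) (β : Fin p → ℝ) :
    trimmedLasso k β
      + ∑ i ∈ univ.filter (fun i : Fin p => ¬ (i : ℕ) < p - k), sortAbs β i = l1 β := by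
  rw [← sum_sortAbs β]
  exact Finset.sum_filter_add_sum_filter_not univ _ _

lemma sortAbs_le_one (β : Fin p → ℝ) (hβ : ∀ i, |β i| ≤ 1) (i : Fin p) : sortAbs β i ≤ 1 := by
  unfold sortAbs; exact hβ _

lemma trimmedLasso_nonneg (k : ℕ) (β : Fin p → ℝ) : 0 ≤ trimmedLasso k β :=
  Finset.sum_nonneg fun i _ => sortAbs_nonneg β i

lemma lower (k : ℕ) (hk : k ≤ p) (β : Fin p → ℝ) (hβ : ∀ i, |β i| ≤ 1) :
    max 0 (l1 β - k) ≤ trimmedLasso k β := by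
  have hbound : ∑ i ∈ univ.filter (fun i : Fin p => ¬ (i : ℕ) < p - k), sortAbs β i ≤ k := by
    calc ∑ i ∈ univ.filter (fun i : Fin p => ¬ (i : ℕ) < p - k), sortAbs β i
        ≤ ((univ.filter fun i : Fin p => ¬ (i : ℕ) < p - k)).card • (1 : ℝ) :=
          Finset.sum_le_card_nsmul _ _ _ (fun i _ => sortAbs_le_one β hβ i)
      _ = k := by rw [card_filter_not_lt k hk]; simp
  have hsplit := split k β
  exact max_le (trimmedLasso_nonneg k β) (by linarith)

lemma zeroOne (k : ℕ) (hk : k ≤ p) (b : Fin p → ℝ) (hb : ∀ i, b i = 0 ∨ b i = 1) :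
    trimmedLasso k b ≤ max 0 (l1 b - k) := by
  have hs01 : ∀ i, sortAbs b i = 0 ∨ sortAbs b i = 1 := by
    intro i; unfold sortAbs
    rcases hb (Tuple.sort (fun j => |b j|) i) with h | h <;> simp [h]
  by_cases hcase : ∃ j ∈ univ.filter (fun i : Fin p => (i : ℕ) < p - k), sortAbs b j = 1
  · obtain ⟨j, hjmem, hj1⟩ := hcase
    simp only [mem_filter, mem_univ, true_and] at hjmem
    have hone : ∀ i : Fin p, ¬ (i : ℕ) < p - k → sortAbs b i = 1 := by
      intro i hi
      have hji : j ≤ i := Fin.le_def.mpr (by omega)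
      have h1 : (1 : ℝ) ≤ sortAbs b i := hj1 ▸ sortAbs_monotone b hji
      rcases hs01 i with h | h
      · linarith
      · exact h
    have hsplit := split k b
    have hcsum : ∑ i ∈ univ.filter (fun i : Fin p => ¬ (i : ℕ) < p - k), sortAbs b i = k := by
      rw [Finset.sum_congr rfl (fun i hi => hone i (by simpa using hi)),
        Finset.sum_const, card_filter_not_lt k hk]
      simp
    have h2 : trimmedLasso k b = l1 b - k := by rw [hcsum] at hsplit; linarith
    rw [h2]; exact le_max_right _ _
  · push_neg at hcase
    have hz : trimmedLasso k b = 0 := Finset.sum_eq_zero (fun i hi => by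
      rcases hs01 i with h | h
      · exact h
      · exact absurd h (hcase i hi))
    rw [hz]; exact le_max_left _ _

lemma l1_update (a : Fin p → ℝ) (i₀ : Fin p) (c : ℝ) :
    l1 (Function.update a i₀ c) = l1 a - |a i₀| + |c| := by
  have habs : ∀ x, |Function.update a i₀ c x| = Function.update (fun i => |a i|) i₀ |c| x := by
    intro x; by_cases hx : x = i₀ <;> simp [Function.update, hx]
  unfold l1
  rw [Finset.sum_congr rfl (fun x _ => habs x), Finset.sum_update_of_mem (mem_univ i₀),
    Finset.sum_eq_sum_sdiff_singleton_add (mem_univ i₀) (fun i => |a i|)]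
  ring

lemma l1_zeroOne_nat (b : Fin p → ℝ) (hb : ∀ i, b i = 0 ∨ b i = 1) :
    ∃ m : ℕ, l1 b = m := by
  classical
  refine ⟨(univ.filter fun i => b i = 1).card, ?_⟩
  unfold l1
  rw [← Finset.sum_boole]
  apply Finset.sum_congr rfl
  intro i _
  rcases hb i with h | h <;> simp [h]

lemma combine (k m : ℕ) (θ : ℝ) (h0 : 0 ≤ θ) (h1 : θ ≤ 1) :
    θ * max 0 ((m : ℝ) + 1 - k) + (1 - θ) * max 0 ((m : ℝ) - k)
      ≤ max 0 ((m : ℝ) + θ - k) := by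
  rcases le_or_gt k m with h | h
  · have hm : (k : ℝ) ≤ m := by exact_mod_cast h
    rw [max_eq_right (by linarith), max_eq_right (by linarith), max_eq_right (by linarith)]
    nlinarith
  · have hm : (m : ℝ) + 1 ≤ k := by exact_mod_cast h
    rw [max_eq_left (by linarith), max_eq_left (by linarith)]
    simpa using le_max_left 0 ((m : ℝ) + θ - k)

lemma base_le_one (k : ℕ) (hk : k ≤ p) (h : (Fin p → ℝ) → ℝ)
    (hconv : ConvexOn ℝ (Set.univ : Set (Fin p → ℝ)) h)
    (hmin : ∀ β : Fin p → ℝ, (∀ i, |β i| ≤ 1) → h β ≤ trimmedLasso k β)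
    (a : Fin p → ℝ) (h0 : ∀ i, 0 ≤ a i) (h1 : ∀ i, a i ≤ 1)
    (hcard : (univ.filter fun i => 0 < a i ∧ a i < 1).card ≤ 1) :
    h a ≤ max 0 (l1 a - k) := by
  classical
  by_cases hall : ∀ i, a i = 0 ∨ a i = 1
  · have hcube : ∀ i, |a i| ≤ 1 := fun i => abs_le.mpr ⟨by linarith [h0 i], h1 i⟩
    exact (hmin a hcube).trans (zeroOne k hk a hall)
  · push_neg at hall
    obtain ⟨i₀, hi₀0, hi₀1⟩ := hall
    have hfrac : 0 < a i₀ ∧ a i₀ < 1 :=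
      ⟨lt_of_le_of_ne (h0 i₀) (Ne.symm hi₀0), lt_of_le_of_ne (h1 i₀) hi₀1⟩
    have hrest : ∀ i, i ≠ i₀ → a i = 0 ∨ a i = 1 := by
      intro i hi
      by_contra hcon
      push_neg at hcon
      have hifrac : 0 < a i ∧ a i < 1 :=
        ⟨lt_of_le_of_ne (h0 i) (Ne.symm hcon.1), lt_of_le_of_ne (h1 i) hcon.2⟩
      have hsub : ({i₀, i} : Finset (Fin p)) ⊆ univ.filter fun x => 0 < a x ∧ a x < 1 := by
        intro x hx
        simp only [Finset.mem_insert, Finset.mem_singleton] at hx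
        rcases hx with rfl | rfl <;> simp [hfrac, hifrac]
      have hc2 := Finset.card_le_card hsub
      rw [Finset.card_pair (Ne.symm hi)] at hc2
      omega
    set θ := a i₀ with hθ
    set b1 := Function.update a i₀ 1 with hb1def
    set b0 := Function.update a i₀ 0 with hb0def
    have hb1 : ∀ i, b1 i = 0 ∨ b1 i = 1 := by
      intro i
      by_cases hi : i = i₀
      · subst hi; right; simp [hb1def]
      · rw [hb1def, Function.update_of_ne hi]; exact hrest i hi
    have hb0 : ∀ i, b0 i = 0 ∨ b0 i = 1 := by
      intro i
      by_cases hi : i = i₀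
      · subst hi; left; simp [hb0def]
      · rw [hb0def, Function.update_of_ne hi]; exact hrest i hi
    have hcomb : θ • b1 + (1 - θ) • b0 = a := by
      funext x
      simp only [Pi.add_apply, Pi.smul_apply, smul_eq_mul]
      by_cases hx : x = i₀
      · rw [hx, hb1def, hb0def, Function.update_self, Function.update_self, ← hθ]; ring
      · rw [hb1def, hb0def, Function.update_of_ne hx, Function.update_of_ne hx]; ring
    have hc := hconv.2 (Set.mem_univ b1) (Set.mem_univ b0)
      (le_of_lt hfrac.1) (show (0:ℝ) ≤ 1 - θ by linarith [hfrac.2])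
      (show θ + (1 - θ) = 1 by ring)
    rw [hcomb] at hc
    have hcube1 : ∀ i, |b1 i| ≤ 1 := by
      intro i; rcases hb1 i with h' | h' <;> simp [h']
    have hcube0 : ∀ i, |b0 i| ≤ 1 := by
      intro i; rcases hb0 i with h' | h' <;> simp [h']
    have e1 := (hmin b1 hcube1).trans (zeroOne k hk b1 hb1)
    have e0 := (hmin b0 hcube0).trans (zeroOne k hk b0 hb0)
    have hl0 : l1 b0 = l1 a - θ := by
      rw [hb0def, l1_update, abs_of_nonneg (h0 i₀)]; simp [hθ]
    have hl1' : l1 b1 = l1 a - θ + 1 := by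
      rw [hb1def, l1_update, abs_of_nonneg (h0 i₀)]; simp [hθ]
    obtain ⟨m, hm⟩ := l1_zeroOne_nat b0 hb0
    have hla : l1 a = (m : ℝ) + θ := by rw [← hm, hl0]; ring
    have key := combine k m θ (le_of_lt hfrac.1) (le_of_lt hfrac.2)
    have hb1m : l1 b1 = (m : ℝ) + 1 := by rw [hl1', hla]; ring
    have hb0m : l1 b0 = (m : ℝ) := hm
    calc h a ≤ θ * h b1 + (1 - θ) * h b0 := by simpa [smul_eq_mul] using hc
      _ ≤ θ * max 0 ((m : ℝ) + 1 - k) + (1 - θ) * max 0 ((m : ℝ) - k) := by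
          apply add_le_add
          · apply mul_le_mul_of_nonneg_left _ (le_of_lt hfrac.1)
            rw [← hb1m]; exact e1
          · apply mul_le_mul_of_nonneg_left _ (by linarith [hfrac.2])
            rw [← hb0m]; exact e0
      _ ≤ max 0 ((m : ℝ) + θ - k) := key
      _ = max 0 (l1 a - k) := by rw [hla]

lemma key (k : ℕ) (hk : k ≤ p) (h : (Fin p → ℝ) → ℝ)
    (hconv : ConvexOn ℝ (Set.univ : Set (Fin p → ℝ)) h)
    (hmin : ∀ β : Fin p → ℝ, (∀ i, |β i| ≤ 1) → h β ≤ trimmedLasso k β) :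
    ∀ (n : ℕ) (a : Fin p → ℝ), (∀ i, 0 ≤ a i) → (∀ i, a i ≤ 1) →
      (univ.filter fun i => 0 < a i ∧ a i < 1).card ≤ n →
      h a ≤ max 0 (l1 a - k) := by
  classical
  intro n
  induction n with
  | zero =>
    intro a h0 h1 hcard
    exact base_le_one k hk h hconv hmin a h0 h1 (by omega)
  | succ n ih =>
    intro a h0 h1 hcard
    by_cases hsmall : (univ.filter fun i => 0 < a i ∧ a i < 1).card ≤ 1
    · exact base_le_one k hk h hconv hmin a h0 h1 hsmall
    · push_neg at hsmall
      obtain ⟨i, hi, j, hj, hij⟩ := Finset.one_lt_card.mp hsmall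
      simp only [mem_filter, mem_univ, true_and] at hi hj
      set t := min (1 - a i) (a j) with ht_def
      set t' := min (a i) (1 - a j) with ht'_def
      have htpos : 0 < t := lt_min (by linarith [hi.2]) hj.1
      have ht'pos : 0 < t' := lt_min hi.1 (by linarith [hj.2])
      have hsum : 0 < t + t' := by linarith
      have htaj : t ≤ a j := min_le_right _ _
      have htai : t ≤ 1 - a i := min_le_left _ _
      have ht'ai : t' ≤ a i := min_le_left _ _
      have ht'aj : t' ≤ 1 - a j := min_le_right _ _
      set a1 := Function.update (Function.update a i (a i + t)) j (a j - t) with ha1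
      set a2 := Function.update (Function.update a i (a i - t')) j (a j + t') with ha2
      have ha1i : a1 i = a i + t := by
        rw [ha1, Function.update_of_ne hij, Function.update_self]
      have ha1j : a1 j = a j - t := by rw [ha1, Function.update_self]
      have ha1o : ∀ x, x ≠ i → x ≠ j → a1 x = a x := fun x hxi hxj => by
        rw [ha1, Function.update_of_ne hxj, Function.update_of_ne hxi]
      have ha2i : a2 i = a i - t' := by
        rw [ha2, Function.update_of_ne hij, Function.update_self]
      have ha2j : a2 j = a j + t' := by rw [ha2, Function.update_self]
      have ha2o : ∀ x, x ≠ i → x ≠ j → a2 x = a x := fun x hxi hxj => by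
        rw [ha2, Function.update_of_ne hxj, Function.update_of_ne hxi]
      have h01 : ∀ x, 0 ≤ a1 x := by
        intro x
        by_cases hxi : x = i
        · subst hxi; rw [ha1i]; linarith [h0 x]
        · by_cases hxj : x = j
          · subst hxj; rw [ha1j]; linarith
          · rw [ha1o x hxi hxj]; exact h0 x
      have h11 : ∀ x, a1 x ≤ 1 := by
        intro x
        by_cases hxi : x = i
        · subst hxi; rw [ha1i]; linarith
        · by_cases hxj : x = j
          · subst hxj; rw [ha1j]; linarith [h1 x]
          · rw [ha1o x hxi hxj]; exact h1 x
      have h02 : ∀ x, 0 ≤ a2 x := by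
        intro x
        by_cases hxi : x = i
        · subst hxi; rw [ha2i]; linarith
        · by_cases hxj : x = j
          · subst hxj; rw [ha2j]; linarith [h0 x]
          · rw [ha2o x hxi hxj]; exact h0 x
      have h12 : ∀ x, a2 x ≤ 1 := by
        intro x
        by_cases hxi : x = i
        · subst hxi; rw [ha2i]; linarith [h1 x]
        · by_cases hxj : x = j
          · subst hxj; rw [ha2j]; linarith
          · rw [ha2o x hxi hxj]; exact h1 x
      have hl1a1 : l1 a1 = l1 a := by
        rw [ha1, l1_update, l1_update, Function.update_of_ne (Ne.symm hij),
          abs_of_nonneg (h0 j), abs_of_nonneg (show (0:ℝ) ≤ a j - t by linarith),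
          abs_of_nonneg (h0 i), abs_of_nonneg (show (0:ℝ) ≤ a i + t by linarith [h0 i])]
        ring
      have hl1a2 : l1 a2 = l1 a := by
        rw [ha2, l1_update, l1_update, Function.update_of_ne (Ne.symm hij),
          abs_of_nonneg (h0 j), abs_of_nonneg (show (0:ℝ) ≤ a j + t' by linarith [h0 j]),
          abs_of_nonneg (h0 i), abs_of_nonneg (show (0:ℝ) ≤ a i - t' by linarith)]
        ring
      have hmemi : i ∈ univ.filter fun x => 0 < a x ∧ a x < 1 := by
        simp only [mem_filter, mem_univ, true_and]; exact hi
      have hmemj : j ∈ univ.filter fun x => 0 < a x ∧ a x < 1 := by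
        simp only [mem_filter, mem_univ, true_and]; exact hj
      have hred1 : (univ.filter fun x => 0 < a1 x ∧ a1 x < 1).card ≤ n := by
        have hexists : ∃ w ∈ univ.filter (fun x => 0 < a x ∧ a x < 1),
            (univ.filter fun x => 0 < a1 x ∧ a1 x < 1)
              ⊆ (univ.filter fun x => 0 < a x ∧ a x < 1).erase w := by
          rcases min_choice (1 - a i) (a j) with hminc | hminc
          · refine ⟨i, hmemi, ?_⟩
            intro x hx
            simp only [mem_filter, mem_univ, true_and] at hx
            have hxi : x ≠ i := by
              intro he
              rw [he, ha1i] at hx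
              rw [← ht_def] at hminc
              rw [hminc] at hx
              linarith [hx.2]
            refine Finset.mem_erase.mpr ⟨hxi, ?_⟩
            simp only [mem_filter, mem_univ, true_and]
            by_cases hxj : x = j
            · subst hxj; exact hj
            · rw [← ha1o x hxi hxj]; exact hx
          · refine ⟨j, hmemj, ?_⟩
            intro x hx
            simp only [mem_filter, mem_univ, true_and] at hx
            have hxj : x ≠ j := by
              intro he
              rw [he, ha1j] at hx
              rw [← ht_def] at hminc
              rw [hminc] at hx
              linarith [hx.1]
            refine Finset.mem_erase.mpr ⟨hxj, ?_⟩
            simp only [mem_filter, mem_univ, true_and]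
            by_cases hxi : x = i
            · subst hxi; exact hi
            · rw [← ha1o x hxi hxj]; exact hx
        obtain ⟨w, hw, hsub⟩ := hexists
        have := Finset.card_le_card hsub
        rw [Finset.card_erase_of_mem hw] at this
        omega
      have hred2 : (univ.filter fun x => 0 < a2 x ∧ a2 x < 1).card ≤ n := by
        have hexists : ∃ w ∈ univ.filter (fun x => 0 < a x ∧ a x < 1),
            (univ.filter fun x => 0 < a2 x ∧ a2 x < 1)
              ⊆ (univ.filter fun x => 0 < a x ∧ a x < 1).erase w := by
          rcases min_choice (a i) (1 - a j) with hminc | hminc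
          · refine ⟨i, hmemi, ?_⟩
            intro x hx
            simp only [mem_filter, mem_univ, true_and] at hx
            have hxi : x ≠ i := by
              intro he
              rw [he, ha2i] at hx
              rw [← ht'_def] at hminc
              rw [hminc] at hx
              linarith [hx.1]
            refine Finset.mem_erase.mpr ⟨hxi, ?_⟩
            simp only [mem_filter, mem_univ, true_and]
            by_cases hxj : x = j
            · subst hxj; exact hj
            · rw [← ha2o x hxi hxj]; exact hx
          · refine ⟨j, hmemj, ?_⟩
            intro x hx
            simp only [mem_filter, mem_univ, true_and] at hx
            have hxj : x ≠ j := by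
              intro he
              rw [he, ha2j] at hx
              rw [← ht'_def] at hminc
              rw [hminc] at hx
              linarith [hx.2]
            refine Finset.mem_erase.mpr ⟨hxj, ?_⟩
            simp only [mem_filter, mem_univ, true_and]
            by_cases hxi : x = i
            · subst hxi; exact hi
            · rw [← ha2o x hxi hxj]; exact hx
        obtain ⟨w, hw, hsub⟩ := hexists
        have := Finset.card_le_card hsub
        rw [Finset.card_erase_of_mem hw] at this
        omega
      set lam := t' / (t + t') with hlam_def
      set mu := t / (t + t') with hmu_def
      have hlam : 0 ≤ lam := div_nonneg (le_of_lt ht'pos) (le_of_lt hsum)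
      have hmu : 0 ≤ mu := div_nonneg (le_of_lt htpos) (le_of_lt hsum)
      have hlm : lam + mu = 1 := by
        rw [hlam_def, hmu_def, ← add_div]
        rw [add_comm t' t]
        exact div_self (ne_of_gt hsum)
      have hcomb : lam • a1 + mu • a2 = a := by
        funext x
        simp only [Pi.add_apply, Pi.smul_apply, smul_eq_mul]
        by_cases hxi : x = i
        · subst hxi
          rw [ha1i, ha2i, hlam_def, hmu_def]
          field_simp
          ring
        · by_cases hxj : x = j
          · subst hxj
            rw [ha1j, ha2j, hlam_def, hmu_def]
            field_simp
            ring
          · rw [ha1o x hxi hxj, ha2o x hxi hxj, ← add_mul, hlm, one_mul]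
      have hc := hconv.2 (Set.mem_univ a1) (Set.mem_univ a2) hlam hmu hlm
      rw [hcomb] at hc
      have e1 := ih a1 h01 h11 hred1
      have e2 := ih a2 h02 h12 hred2
      rw [hl1a1] at e1
      rw [hl1a2] at e2
      calc h a ≤ lam * h a1 + mu * h a2 := by simpa [smul_eq_mul] using hc
        _ ≤ lam * max 0 (l1 a - k) + mu * max 0 (l1 a - k) :=
            add_le_add (mul_le_mul_of_nonneg_left e1 hlam) (mul_le_mul_of_nonneg_left e2 hmu)
        _ = max 0 (l1 a - k) := by rw [← add_mul, hlm, one_mul]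

lemma sortAbs_mul_sign (ε β : Fin p → ℝ) (hε : ∀ i, |ε i| = 1) :
    sortAbs (fun i => ε i * β i) = sortAbs β := by
  have habs : (fun j => |ε j * β j|) = fun j => |β j| := by
    funext j; rw [abs_mul, hε j, one_mul]
  funext i
  simp only [sortAbs]
  rw [habs, abs_mul, hε, one_mul]

lemma trimmedLasso_mul_sign (k : ℕ) (ε β : Fin p → ℝ) (hε : ∀ i, |ε i| = 1) :
    trimmedLasso k (fun i => ε i * β i) = trimmedLasso k β := by
  unfold trimmedLasso
  rw [sortAbs_mul_sign ε β hε]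

end TLaux

/-- Lemma 5.1: `β ↦ max{0, ‖β‖₁ - k}` is the convex envelope of
the trimmed Lasso penalty `T_k` on `[-1,1]^p`: it is convex, it minorizes `T_k`
on `[-1,1]^p`, and it majorizes (on `[-1,1]^p`) every convex function that
minorizes `T_k` on `[-1,1]^p`. -/
theorem trimmedLasso_convex_envelope {p : ℕ} (k : ℕ) (hk : k ≤ p) :
    ConvexOn ℝ (Set.univ : Set (Fin p → ℝ)) (fun β => max 0 (l1 β - (k : ℝ))) ∧
    (∀ β : Fin p → ℝ, (∀ i, |β i| ≤ 1) →
      max 0 (l1 β - (k : ℝ)) ≤ trimmedLasso k β) ∧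
    (∀ h : (Fin p → ℝ) → ℝ, ConvexOn ℝ (Set.univ : Set (Fin p → ℝ)) h →
      (∀ β : Fin p → ℝ, (∀ i, |β i| ≤ 1) → h β ≤ trimmedLasso k β) →
      ∀ β : Fin p → ℝ, (∀ i, |β i| ≤ 1) → h β ≤ max 0 (l1 β - (k : ℝ))) := by
  classical
  refine ⟨?_, ?_, ?_⟩
  · refine ⟨convex_univ, fun x _ y _ c d hc hd hcd => ?_⟩
    have hl : l1 (c • x + d • y) ≤ c * l1 x + d * l1 y := by
      unfold l1
      rw [Finset.mul_sum, Finset.mul_sum, ← Finset.sum_add_distrib]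
      apply Finset.sum_le_sum
      intro i _
      simp only [Pi.add_apply, Pi.smul_apply, smul_eq_mul]
      calc |c * x i + d * y i| ≤ |c * x i| + |d * y i| := abs_add_le _ _
        _ = c * |x i| + d * |y i| := by
            rw [abs_mul, abs_mul, abs_of_nonneg hc, abs_of_nonneg hd]
    simp only [smul_eq_mul]
    apply max_le
    · exact add_nonneg (mul_nonneg hc (le_max_left _ _)) (mul_nonneg hd (le_max_left _ _))
    · have hkk : c * (k : ℝ) + d * (k : ℝ) = k := by rw [← add_mul, hcd, one_mul]
      have h1 : c * (l1 x - k) ≤ c * max 0 (l1 x - k) :=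
        mul_le_mul_of_nonneg_left (le_max_right _ _) hc
      have h2 : d * (l1 y - k) ≤ d * max 0 (l1 y - k) :=
        mul_le_mul_of_nonneg_left (le_max_right _ _) hd
      nlinarith [hl]
  · intro β hβ
    exact TLaux.lower k hk β hβ
  · intro h hconv hmin β hβ
    set ε : Fin p → ℝ := fun i => if β i < 0 then -1 else 1 with hε_def
    have hε : ∀ i, |ε i| = 1 := by
      intro i
      by_cases hb : β i < 0 <;> simp [hε_def, hb]
    have hεβ : ∀ i, ε i * |β i| = β i := by
      intro i
      by_cases hb : β i < 0
      · simp [hε_def, hb, abs_of_neg hb]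
      · simp [hε_def, hb, abs_of_nonneg (not_lt.mp hb)]
    set h' : (Fin p → ℝ) → ℝ := fun y => h (fun i => ε i * y i) with hh'
    have hconv' : ConvexOn ℝ (Set.univ : Set (Fin p → ℝ)) h' := by
      refine ⟨convex_univ, fun x _ y _ c d hc hd hcd => ?_⟩
      have heq : (fun i => ε i * (c • x + d • y) i)
          = c • (fun i => ε i * x i) + d • (fun i => ε i * y i) := by
        funext i
        simp only [Pi.add_apply, Pi.smul_apply, smul_eq_mul]
        ring
      show h (fun i => ε i * (c • x + d • y) i) ≤ c • h' x + d • h' y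
      rw [heq]
      exact hconv.2 (Set.mem_univ _) (Set.mem_univ _) hc hd hcd
    have hmin' : ∀ y : Fin p → ℝ, (∀ i, |y i| ≤ 1) → h' y ≤ trimmedLasso k y := by
      intro y hy
      have hy' : ∀ i, |ε i * y i| ≤ 1 := by
        intro i; rw [abs_mul, hε i, one_mul]; exact hy i
      calc h' y = h (fun i => ε i * y i) := rfl
        _ ≤ trimmedLasso k (fun i => ε i * y i) := hmin _ hy'
        _ = trimmedLasso k y := TLaux.trimmedLasso_mul_sign k ε y hε
    have key' := TLaux.key k hk h' hconv' hmin' p (fun i => |β i|)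
      (fun i => abs_nonneg _) hβ
      ((Finset.card_filter_le _ _).trans (by simp))
    have heq1 : h' (fun i => |β i|) = h β := by
      have hfe : (fun i => ε i * |β i|) = β := funext hεβ
      show h (fun i => ε i * |β i|) = h β
      rw [hfe]
    have heq2 : l1 (fun i => |β i|) = l1 β := by
      unfold l1; simp [abs_abs]
    rw [heq1, heq2] at key'
    exact key'
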